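/- Let d ≥ 2 be an integer and for λ > 0 let f_{λ,d}(x) = λ (1/(1+x))^d. Then f_{λ,d} has a unique positive fixed point x̂ (i.e., x̂ > 0 with f_{λ,d}(x̂) = x̂). Moreover, setting λ_c = d^d/(d−1)^{d+1}: if λ = λ_c then |f'_{λ,d}(x̂)| = 1, and for every 0 < λ < λ_c it holds that |f'_{λ,d}(x̂)| < 1. -/

import Mathlib

private lemma gmono (d : ℕ) (hd : d ≠ 0) {x y : ℝ} (hx : 0 ≤ x) (hxy : x < y) :
    x * (1 + x) ^ d < y * (1 + y) ^ d := by
  have hy : 0 < y := lt_of_le_of_lt hx hxy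
  have h1x : (0:ℝ) ≤ 1 + x := by linarith
  calc x * (1 + x) ^ d ≤ y * (1 + x) ^ d := by
        exact mul_le_mul_of_nonneg_right (le_of_lt hxy) (pow_nonneg h1x d)
    _ < y * (1 + y) ^ d := by
        apply mul_lt_mul_of_pos_left _ hy
        exact pow_lt_pow_left₀ (by linarith) h1x hd

private lemma gval (d : ℕ) (hd : 2 ≤ d) :
    (1 / ((d : ℝ) - 1)) * (1 + 1 / ((d : ℝ) - 1)) ^ d
      = (d : ℝ) ^ d / ((d : ℝ) - 1) ^ (d + 1) := by
  have hD : (2:ℝ) ≤ (d : ℝ) := by exact_mod_cast hd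
  have h1 : ((d : ℝ) - 1) ≠ 0 := by linarith
  have h2 : 1 + 1 / ((d : ℝ) - 1) = (d : ℝ) / ((d : ℝ) - 1) := by field_simp; ring
  rw [h2, div_pow, pow_succ]
  field_simp

private lemma deriv_val (d : ℕ) (hd : 2 ≤ d) (lam x : ℝ) (hx : 0 < x)
    (hfix : lam / (1 + x) ^ d = x) :
    deriv (fun y : ℝ => lam / (1 + y) ^ d) x = -((d : ℝ) * x / (1 + x)) := by
  obtain ⟨e, rfl⟩ : ∃ e, d = e + 1 := ⟨d - 1, by omega⟩
  have hu : (0:ℝ) < 1 + x := by linarith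
  have hune : (1 + x) ≠ 0 := ne_of_gt hu
  have hpow : ((1 + x) ^ (e + 1)) ≠ 0 := pow_ne_zero _ hune
  have hlam : lam = x * (1 + x) ^ (e + 1) := by
    field_simp at hfix
    linarith [hfix]
  have h1 : HasDerivAt (fun y : ℝ => 1 + y) 1 x := (hasDerivAt_id x).const_add 1
  have h2 : HasDerivAt (fun y : ℝ => (1 + y) ^ (e + 1))
      (((e + 1 : ℕ) : ℝ) * (1 + x) ^ (e + 1 - 1) * 1) x := h1.pow (e + 1)
  have h3 : HasDerivAt (fun y : ℝ => lam / (1 + y) ^ (e + 1))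
      ((0 * (1 + x) ^ (e + 1) - lam * (((e + 1 : ℕ) : ℝ) * (1 + x) ^ (e + 1 - 1) * 1))
        / ((1 + x) ^ (e + 1)) ^ 2) x :=
    (hasDerivAt_const x lam).div h2 hpow
  rw [h3.deriv, hlam]
  simp only [Nat.add_sub_cancel]
  field_simp
  ring

theorem stmt_1 (d : ℕ) (hd : 2 ≤ d) (lam : ℝ) (hlam : 0 < lam) :
    (∃! x : ℝ, 0 < x ∧ lam / (1 + x) ^ d = x) ∧
    (∀ xhat : ℝ, 0 < xhat → lam / (1 + xhat) ^ d = xhat →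
      ((lam = (d : ℝ) ^ d / ((d : ℝ) - 1) ^ (d + 1) →
          |deriv (fun x : ℝ => lam / (1 + x) ^ d) xhat| = 1) ∧
       (lam < (d : ℝ) ^ d / ((d : ℝ) - 1) ^ (d + 1) →
          |deriv (fun x : ℝ => lam / (1 + x) ^ d) xhat| < 1))) := by
  have hd0 : d ≠ 0 := by omega
  have hD : (2:ℝ) ≤ (d : ℝ) := by exact_mod_cast hd
  have hD1 : (0:ℝ) < (d : ℝ) - 1 := by linarith
  -- equivalence between fixed point and g x = lam
  have key : ∀ x : ℝ, 0 < x → (lam / (1 + x) ^ d = x ↔ x * (1 + x) ^ d = lam) := by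
    intro x hx
    have hu : (0:ℝ) < 1 + x := by linarith
    have hpow : ((1 + x) ^ d) ≠ 0 := pow_ne_zero _ (ne_of_gt hu)
    rw [div_eq_iff hpow]
    constructor <;> intro h <;> linarith
  constructor
  · -- existence and uniqueness
    have hcont : ContinuousOn (fun x : ℝ => x * (1 + x) ^ d) (Set.Icc 0 lam) := by
      fun_prop
    have h0 : (fun x : ℝ => x * (1 + x) ^ d) 0 = 0 := by simp
    have hb : lam ≤ (fun x : ℝ => x * (1 + x) ^ d) lam := by
      simp only
      nlinarith [one_le_pow₀ (by linarith : (1:ℝ) ≤ 1 + lam) (n := d)]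
    have := intermediate_value_Icc (le_of_lt hlam) hcont
    have hmem : lam ∈ Set.Icc ((fun x : ℝ => x * (1 + x) ^ d) 0)
        ((fun x : ℝ => x * (1 + x) ^ d) lam) := by
      rw [h0]; exact ⟨le_of_lt hlam, hb⟩
    obtain ⟨x, hxI, hxg⟩ := this hmem
    have hxg' : x * (1 + x) ^ d = lam := hxg
    have hxpos : 0 < x := by
      rcases lt_or_eq_of_le hxI.1 with h | h
      · exact h
      · exfalso; rw [← h] at hxg'; simp at hxg'; linarith
    refine ⟨x, ⟨hxpos, (key x hxpos).2 hxg'⟩, ?_⟩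
    rintro y ⟨hy, hyfix⟩
    have hyg := (key y hy).1 hyfix
    rcases lt_trichotomy y x with h | h | h
    · exfalso; have := gmono d hd0 (le_of_lt hy) h; rw [hyg, hxg'] at this; linarith
    · exact h
    · exfalso; have := gmono d hd0 (le_of_lt hxpos) h; rw [hxg', hyg] at this; linarith
  · intro x hx hfix
    have hgx := (key x hx).1 hfix
    have hdv := deriv_val d hd lam x hx hfix
    have hu : (0:ℝ) < 1 + x := by linarith
    have habs : |deriv (fun y : ℝ => lam / (1 + y) ^ d) x| = (d : ℝ) * x / (1 + x) := by
      rw [hdv, abs_neg, abs_of_nonneg]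
      positivity
    have hx0pos : (0:ℝ) < 1 / ((d : ℝ) - 1) := by positivity
    constructor
    · intro hlc
      -- x = 1/(d-1)
      have hgx0 := gval d hd
      have hxeq : x = 1 / ((d : ℝ) - 1) := by
        by_contra hne
        rcases lt_or_gt_of_ne hne with h | h
        · have := gmono d hd0 (le_of_lt hx) h
          rw [hgx, hgx0, ← hlc] at this; linarith
        · have := gmono d hd0 (le_of_lt hx0pos) h
          rw [hgx, hgx0, ← hlc] at this; linarith
      rw [habs, hxeq]
      have : (1:ℝ) + 1 / ((d : ℝ) - 1) = (d : ℝ) / ((d : ℝ) - 1) := by field_simp; ring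
      rw [this]
      field_simp
    · intro hlt
      have hgx0 := gval d hd
      have hxlt : x < 1 / ((d : ℝ) - 1) := by
        by_contra hge
        push_neg at hge
        rcases lt_or_eq_of_le hge with h | h
        · have := gmono d hd0 (le_of_lt hx0pos) h
          rw [hgx, hgx0] at this; linarith
        · rw [← h] at hgx; rw [hgx0] at hgx; linarith
      rw [habs, div_lt_one hu]
      have : ((d:ℝ) - 1) * x < 1 := by
        calc ((d:ℝ) - 1) * x < ((d:ℝ) - 1) * (1 / ((d:ℝ) - 1)) :=
              mul_lt_mul_of_pos_left hxlt hD1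
          _ = 1 := by field_simp
      linarith
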